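/- Let X = (X_{ij}) be a skew-symmetric n×n matrix of indeterminates over a field K and α = [a_1,...,a_{2t}] a strictly increasing sequence in {1,...,n}. Let X' be a skew-symmetric matrix of indeterminates of size n - a_1 + 1 and β = [1, a_2 - a_1 + 1, ..., a_{2t} - a_1 + 1]. Then there is a K-algebra isomorphism K[X]/I_α(X) ≅ K[X']/I_β(X'), where I_α(X) (resp. I_β(X')) is the ideal generated by all Pfaffians γ of X (resp. X') with γ ≱ α (resp. γ ≱ β). -/

import Mathlib

/-- The index set of the variables `X_{ij}`, `1 ≤ i < j ≤ n` (0-indexed). -/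
abbrev UT (n : ℕ) := {p : Fin n × Fin n // p.1 < p.2}

/-- The generic skew-symmetric `n × n` matrix over `K[X_{ij} : i < j]`. -/
noncomputable def genSkew (K : Type*) [CommRing K] (n : ℕ) :
    Matrix (Fin n) (Fin n) (MvPolynomial (UT n) K) :=
  fun i j =>
    if h : i < j then MvPolynomial.X ⟨(i, j), h⟩
    else if h' : j < i then - MvPolynomial.X ⟨(j, i), h'⟩ else 0

/-- The Pfaffian of a `2m × 2m` matrix, as a sum over perfect matchings. -/
def pfaffian {R : Type*} [CommRing R] (m : ℕ)
    (A : Matrix (Fin (2 * m)) (Fin (2 * m)) R) : R :=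
  ∑ σ ∈ Finset.univ.filter (fun σ : Equiv.Perm (Fin (2 * m)) =>
      (∀ k : Fin m, σ ⟨2 * k.1, by have := k.2; omega⟩ < σ ⟨2 * k.1 + 1, by have := k.2; omega⟩) ∧
      (∀ k l : Fin m, k < l →
        σ ⟨2 * k.1, by have := k.2; omega⟩ < σ ⟨2 * l.1, by have := l.2; omega⟩)),
    (Equiv.Perm.sign σ : ℤ) •
      ∏ k : Fin m, A (σ ⟨2 * k.1, by have := k.2; omega⟩) (σ ⟨2 * k.1 + 1, by have := k.2; omega⟩)

/-- The Pfaffian order on index sequences: `[a_1,...,a_{2t}] ≤ [c_1,...,c_{2s}]` iff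
`t ≥ s` and `a_i ≤ c_i` for `i = 1,...,2s`. -/
def pfLeIdx {n n' : ℕ} (t s : ℕ) (a : Fin (2 * t) → Fin n) (c : Fin (2 * s) → Fin n') :
    Prop :=
  ∃ h : s ≤ t, ∀ i : Fin (2 * s),
    (a ⟨i.1, by have := i.2; omega⟩ : ℕ) ≤ (c i : ℕ)

/-- The ideal of `K[X_{ij}]` cogenerated by the Pfaffian with index sequence `a`:
it is generated by all Pfaffians `γ` of the generic skew-symmetric matrix with `γ ≱ α`. -/
noncomputable def cogenIdeal (K : Type*) [Field K] (n t : ℕ) (a : Fin (2 * t) → Fin n) :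
    Ideal (MvPolynomial (UT n) K) :=
  Ideal.span {p | ∃ (s : ℕ) (c : Fin (2 * s) → Fin n), StrictMono c ∧
    ¬ pfLeIdx t s a c ∧ p = pfaffian s ((genSkew K n).submatrix c c)}

open MvPolynomial

lemma pfaffian_ringHom_map {R S : Type*} [CommRing R] [CommRing S] (f : R →+* S) (m : ℕ)
    (A : Matrix (Fin (2 * m)) (Fin (2 * m)) R) :
    f (pfaffian m A) = pfaffian m (A.map f) := by
  unfold pfaffian
  rw [map_sum]
  refine Finset.sum_congr rfl fun σ _ => ?_
  rw [map_zsmul, map_prod]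
  rfl

lemma pfaffian_eq_zero_of_row {R : Type*} [CommRing R] (m : ℕ)
    (A : Matrix (Fin (2 * m)) (Fin (2 * m)) R) (r : Fin (2 * m))
    (hr : ∀ j, A r j = 0) (hc : ∀ j, A j r = 0) : pfaffian m A = 0 := by
  unfold pfaffian
  refine Finset.sum_eq_zero fun σ _ => ?_
  set j := σ.symm r with hjdef
  have hj : σ j = r := σ.apply_symm_apply r
  have hj2 : (j : ℕ) < 2 * m := j.2
  have hjm : (j : ℕ) / 2 < m := by omega
  have hz : A (σ ⟨2 * ((j : ℕ) / 2), by omega⟩) (σ ⟨2 * ((j : ℕ) / 2) + 1, by omega⟩) = 0 := by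
    have hcase : (j : ℕ) = 2 * ((j : ℕ) / 2) ∨ (j : ℕ) = 2 * ((j : ℕ) / 2) + 1 := by omega
    rcases hcase with h | h
    · have he : (⟨2 * ((j : ℕ) / 2), by omega⟩ : Fin (2 * m)) = j := Fin.ext h.symm
      rw [he, hj]; exact hr _
    · have he : (⟨2 * ((j : ℕ) / 2) + 1, by omega⟩ : Fin (2 * m)) = j := Fin.ext h.symm
      rw [he, hj]; exact hc _
  rw [Finset.prod_eq_zero (Finset.mem_univ (⟨(j : ℕ) / 2, hjm⟩ : Fin m)) hz, smul_zero]

lemma pfaffian_one {R : Type*} [CommRing R] (A : Matrix (Fin (2 * 1)) (Fin (2 * 1)) R) :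
    pfaffian 1 A = A ⟨0, by omega⟩ ⟨1, by omega⟩ := by
  unfold pfaffian
  have hfilter : (Finset.univ.filter (fun σ : Equiv.Perm (Fin (2 * 1)) =>
      (∀ k : Fin 1, σ ⟨2 * k.1, by have := k.2; omega⟩ < σ ⟨2 * k.1 + 1, by have := k.2; omega⟩) ∧
      (∀ k l : Fin 1, k < l →
        σ ⟨2 * k.1, by have := k.2; omega⟩ < σ ⟨2 * l.1, by have := l.2; omega⟩)))
      = {(1 : Equiv.Perm (Fin (2 * 1)))} := by
    ext σ
    simp only [Finset.mem_filter, Finset.mem_univ, true_and, Finset.mem_singleton]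
    constructor
    · rintro ⟨h1, -⟩
      have hm0 : (0 : ℕ) < 2 * 1 := by omega
      have hm1 : (1 : ℕ) < 2 * 1 := by omega
      have h : ((σ ⟨0, hm0⟩ : Fin (2 * 1)) : ℕ) < ((σ ⟨1, hm1⟩ : Fin (2 * 1)) : ℕ) :=
        h1 ⟨0, by omega⟩
      have hb0 : ((σ ⟨0, hm0⟩ : Fin (2 * 1)) : ℕ) < 2 * 1 := (σ _).2
      have hb1 : ((σ ⟨1, hm1⟩ : Fin (2 * 1)) : ℕ) < 2 * 1 := (σ _).2
      ext x
      have hx : (x : ℕ) < 2 * 1 := x.2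
      have hx01 : x = ⟨0, hm0⟩ ∨ x = ⟨1, hm1⟩ := by
        rcases Nat.lt_or_ge (x : ℕ) 1 with h' | h'
        · exact Or.inl (by apply Fin.ext; simp only []; omega)
        · exact Or.inr (by apply Fin.ext; simp only []; omega)
      simp only [Equiv.Perm.coe_one, id_eq]
      rcases hx01 with rfl | rfl
      · simp only [Fin.val_mk]; omega
      · simp only [Fin.val_mk]; omega
    · rintro rfl
      refine ⟨fun k => ?_, fun k l h => ?_⟩
      · simp only [Equiv.Perm.coe_one, id_eq]
        exact Fin.mk_lt_mk.mpr (by omega)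
      · exact absurd (show (k : ℕ) < (l : ℕ) from h) (by have := k.2; have := l.2; omega)
  rw [hfilter, Finset.sum_singleton]
  simp only [map_one, Units.val_one, one_smul]
  rw [Fin.prod_univ_one]
  simp only [Equiv.Perm.coe_one, id_eq, Fin.val_zero, Nat.mul_zero]

lemma UT.ext' {n : ℕ} {v w : UT n} (h1 : (v.1.1 : ℕ) = (w.1.1 : ℕ))
    (h2 : (v.1.2 : ℕ) = (w.1.2 : ℕ)) : v = w :=
  Subtype.ext (Prod.ext (Fin.ext h1) (Fin.ext h2))

/-- The substitution `X_{ij} ↦ X_{i-a0,j-a0}` if `a0 ≤ i`, else `0`. -/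
noncomputable def redHom (K : Type*) [Field K] (n a0 : ℕ) :
    MvPolynomial (UT n) K →ₐ[K] MvPolynomial (UT (n - a0)) K :=
  MvPolynomial.aeval fun v =>
    if h : a0 ≤ (v.1.1 : ℕ) then
      MvPolynomial.X ⟨(⟨(v.1.1 : ℕ) - a0, by have h1 := v.1.1.2; omega⟩,
          ⟨(v.1.2 : ℕ) - a0, by have h2 := v.1.2.2; omega⟩), by
        apply Fin.mk_lt_mk.mpr
        have h3 : (v.1.1 : ℕ) < (v.1.2 : ℕ) := v.2
        omega⟩
    else 0

/-- The substitution `X_{ij} ↦ X_{i+a0,j+a0}`. -/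
noncomputable def secHom (K : Type*) [Field K] (n a0 : ℕ) :
    MvPolynomial (UT (n - a0)) K →ₐ[K] MvPolynomial (UT n) K :=
  MvPolynomial.aeval fun v =>
    MvPolynomial.X ⟨(⟨(v.1.1 : ℕ) + a0, by have h1 := v.1.1.2; omega⟩,
        ⟨(v.1.2 : ℕ) + a0, by have h2 := v.1.2.2; omega⟩), by
      apply Fin.mk_lt_mk.mpr
      have h3 : (v.1.1 : ℕ) < (v.1.2 : ℕ) := v.2
      omega⟩

lemma redHom_genSkew_ge (K : Type*) [Field K] (n a0 : ℕ) (i j : Fin n)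
    (hi : a0 ≤ (i : ℕ)) (hj : a0 ≤ (j : ℕ))
    (hi' : (i : ℕ) - a0 < n - a0) (hj' : (j : ℕ) - a0 < n - a0) :
    redHom K n a0 (genSkew K n i j)
      = genSkew K (n - a0) ⟨(i : ℕ) - a0, hi'⟩ ⟨(j : ℕ) - a0, hj'⟩ := by
  unfold genSkew redHom
  rcases lt_trichotomy i j with h | h | h
  · have hij : (i : ℕ) < (j : ℕ) := h
    rw [dif_pos h, MvPolynomial.aeval_X, dif_pos hi,
      dif_pos (show (⟨(i:ℕ)-a0,hi'⟩ : Fin (n-a0)) < ⟨(j:ℕ)-a0,hj'⟩ from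
        Fin.mk_lt_mk.mpr (by omega))]
  · subst h
    rw [dif_neg (lt_irrefl i), dif_neg (lt_irrefl i), map_zero,
      dif_neg (lt_irrefl _), dif_neg (lt_irrefl _)]
  · have hij : (j : ℕ) < (i : ℕ) := h
    rw [dif_neg (asymm h), dif_pos h, map_neg, MvPolynomial.aeval_X, dif_pos hj,
      dif_neg (show ¬ (⟨(i:ℕ)-a0,hi'⟩ : Fin (n-a0)) < ⟨(j:ℕ)-a0,hj'⟩ from by
        simp only [Fin.mk_lt_mk]; omega),
      dif_pos (show (⟨(j:ℕ)-a0,hj'⟩ : Fin (n-a0)) < ⟨(i:ℕ)-a0,hi'⟩ from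
        Fin.mk_lt_mk.mpr (by omega))]

lemma redHom_genSkew_zero (K : Type*) [Field K] (n a0 : ℕ) (i j : Fin n)
    (hij : (i : ℕ) < a0 ∨ (j : ℕ) < a0) :
    redHom K n a0 (genSkew K n i j) = 0 := by
  unfold genSkew redHom
  rcases lt_trichotomy i j with h | h | h
  · have h' : (i : ℕ) < (j : ℕ) := h
    rw [dif_pos h, MvPolynomial.aeval_X, dif_neg (show ¬ a0 ≤ (i : ℕ) from by omega)]
  · subst h
    rw [dif_neg (lt_irrefl i), dif_neg (lt_irrefl i), map_zero]
  · have h' : (j : ℕ) < (i : ℕ) := h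
    rw [dif_neg (asymm h), dif_pos h, map_neg, MvPolynomial.aeval_X,
      dif_neg (show ¬ a0 ≤ (j : ℕ) from by omega), neg_zero]

lemma secHom_genSkew (K : Type*) [Field K] (n a0 : ℕ) (i j : Fin (n - a0))
    (hi' : (i : ℕ) + a0 < n) (hj' : (j : ℕ) + a0 < n) :
    secHom K n a0 (genSkew K (n - a0) i j)
      = genSkew K n ⟨(i : ℕ) + a0, hi'⟩ ⟨(j : ℕ) + a0, hj'⟩ := by
  unfold genSkew secHom
  rcases lt_trichotomy i j with h | h | h
  · have hij : (i : ℕ) < (j : ℕ) := h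
    rw [dif_pos h, MvPolynomial.aeval_X,
      dif_pos (show (⟨(i:ℕ)+a0,hi'⟩ : Fin n) < ⟨(j:ℕ)+a0,hj'⟩ from
        Fin.mk_lt_mk.mpr (by omega))]
  · subst h
    rw [dif_neg (lt_irrefl i), dif_neg (lt_irrefl i), map_zero,
      dif_neg (lt_irrefl _), dif_neg (lt_irrefl _)]
  · have hij : (j : ℕ) < (i : ℕ) := h
    rw [dif_neg (asymm h), dif_pos h, map_neg, MvPolynomial.aeval_X,
      dif_neg (show ¬ (⟨(i:ℕ)+a0,hi'⟩ : Fin n) < ⟨(j:ℕ)+a0,hj'⟩ from by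
        simp only [Fin.mk_lt_mk]; omega),
      dif_pos (show (⟨(j:ℕ)+a0,hj'⟩ : Fin n) < ⟨(i:ℕ)+a0,hi'⟩ from
        Fin.mk_lt_mk.mpr (by omega))]

lemma sec_red_X (K : Type*) [Field K] (n a0 : ℕ) (v : UT (n - a0)) :
    redHom K n a0 (secHom K n a0 (MvPolynomial.X v)) = MvPolynomial.X v := by
  unfold secHom redHom
  rw [MvPolynomial.aeval_X, MvPolynomial.aeval_X,
    dif_pos (show a0 ≤ (v.1.1 : ℕ) + a0 by omega)]
  exact congrArg _ (UT.ext' (by simp only [Fin.val_mk]; omega)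
    (by simp only [Fin.val_mk]; omega))

lemma red_sec_X_ge (K : Type*) [Field K] (n a0 : ℕ) (v : UT n) (h : a0 ≤ (v.1.1 : ℕ)) :
    secHom K n a0 (redHom K n a0 (MvPolynomial.X v)) = MvPolynomial.X v := by
  have h2 : (v.1.1 : ℕ) < (v.1.2 : ℕ) := v.2
  unfold secHom redHom
  rw [MvPolynomial.aeval_X, dif_pos h, MvPolynomial.aeval_X]
  exact congrArg _ (UT.ext' (by simp only [Fin.val_mk]; omega)
    (by simp only [Fin.val_mk]; omega))

lemma red_X_lt (K : Type*) [Field K] (n a0 : ℕ) (v : UT n) (h : ¬ a0 ≤ (v.1.1 : ℕ)) :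
    redHom K n a0 (MvPolynomial.X v) = 0 := by
  unfold redHom
  rw [MvPolynomial.aeval_X, dif_neg h]

/-- `K[X]/I_α(X) ≅ K[X']/I_β(X')`, where `X'` has size `n - a_1 + 1` and
`β = [1, a_2 - a_1 + 1, ..., a_{2t} - a_1 + 1]` (everything 0-indexed: `b i = a i - a 0`). -/
theorem reduction_iso (K : Type*) [Field K] (n t : ℕ) (ht : 1 ≤ t) (h2t : 0 < 2 * t)
    (a : Fin (2 * t) → Fin n) (ha : StrictMono a)
    (b : Fin (2 * t) → Fin (n - (a ⟨0, h2t⟩ : ℕ)))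
    (hb : ∀ i, (b i : ℕ) = (a i : ℕ) - (a ⟨0, h2t⟩ : ℕ)) :
    Nonempty
      ((MvPolynomial (UT n) K ⧸ cogenIdeal K n t a) ≃ₐ[K]
        (MvPolynomial (UT (n - (a ⟨0, h2t⟩ : ℕ))) K ⧸
          cogenIdeal K (n - (a ⟨0, h2t⟩ : ℕ)) t b)) := by
  classical
  have ha0n : ((a ⟨0, h2t⟩ : Fin n) : ℕ) < n := (a ⟨0, h2t⟩).2
  have ha0le : ∀ i, ((a ⟨0, h2t⟩ : Fin n) : ℕ) ≤ (a i : ℕ) := fun i => by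
    have hi : (⟨0, h2t⟩ : Fin (2 * t)) ≤ i := by
      simp only [Fin.le_def, Fin.val_mk]; omega
    exact ha.monotone hi
  -- every variable with row index < ((a ⟨0, h2t⟩ : Fin n) : ℕ) lies in the ideal
  have hXmem : ∀ v : UT n, (v.1.1 : ℕ) < ((a ⟨0, h2t⟩ : Fin n) : ℕ) → MvPolynomial.X v ∈ cogenIdeal K n t a := by
    intro v hv
    refine Ideal.subset_span
      ⟨1, (fun k => if (k : ℕ) = 0 then v.1.1 else v.1.2), ?_, ?_, ?_⟩
    · intro k l hkl
      have hk2 := k.2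
      have hl2 := l.2
      have hkl' : (k : ℕ) < (l : ℕ) := hkl
      have hk0 : (k : ℕ) = 0 := by omega
      have hl1 : (l : ℕ) = 1 := by omega
      show (if (k : ℕ) = 0 then v.1.1 else v.1.2) < (if (l : ℕ) = 0 then v.1.1 else v.1.2)
      rw [if_pos hk0, if_neg (by omega)]
      exact v.2
    · rintro ⟨hst, hle⟩
      have h5 : ((a ⟨0, h2t⟩ : Fin n) : ℕ) ≤ (v.1.1 : ℕ) := hle ⟨0, by omega⟩
      omega
    · rw [pfaffian_one]
      show MvPolynomial.X v = genSkew K n v.1.1 v.1.2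
      unfold genSkew
      rw [dif_pos v.2]
  -- the forward map sends generators into the target ideal
  have hφI : ∀ p ∈ {p | ∃ (s : ℕ) (c : Fin (2 * s) → Fin n), StrictMono c ∧
      ¬ pfLeIdx t s a c ∧ p = pfaffian s ((genSkew K n).submatrix c c)},
      redHom K n ((a ⟨0, h2t⟩ : Fin n) : ℕ) p ∈ cogenIdeal K (n - ((a ⟨0, h2t⟩ : Fin n) : ℕ)) t b := by
    rintro p ⟨s, c, hc, hnle, rfl⟩
    have key : redHom K n ((a ⟨0, h2t⟩ : Fin n) : ℕ) (pfaffian s ((genSkew K n).submatrix c c))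
        = pfaffian s (((genSkew K n).submatrix c c).map (redHom K n ((a ⟨0, h2t⟩ : Fin n) : ℕ)).toRingHom) :=
      pfaffian_ringHom_map (redHom K n ((a ⟨0, h2t⟩ : Fin n) : ℕ)).toRingHom s _
    by_cases hall : ∀ i, ((a ⟨0, h2t⟩ : Fin n) : ℕ) ≤ (c i : ℕ)
    · have hbound : ∀ i : Fin (2 * s), (c i : ℕ) - ((a ⟨0, h2t⟩ : Fin n) : ℕ) < n - ((a ⟨0, h2t⟩ : Fin n) : ℕ) := fun i => by
        have := (c i).2; have := hall i; omega
      have heq : ((genSkew K n).submatrix c c).map (redHom K n ((a ⟨0, h2t⟩ : Fin n) : ℕ)).toRingHom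
          = (genSkew K (n - ((a ⟨0, h2t⟩ : Fin n) : ℕ))).submatrix
              (fun i => ⟨(c i : ℕ) - ((a ⟨0, h2t⟩ : Fin n) : ℕ), hbound i⟩) (fun i => ⟨(c i : ℕ) - ((a ⟨0, h2t⟩ : Fin n) : ℕ), hbound i⟩) := by
        refine Matrix.ext fun i j => ?_
        simp only [Matrix.map_apply, Matrix.submatrix_apply, AlgHom.coe_toRingHom]
        exact redHom_genSkew_ge K n ((a ⟨0, h2t⟩ : Fin n) : ℕ) (c i) (c j) (hall i) (hall j) (hbound i) (hbound j)
      rw [key, heq]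
      refine Ideal.subset_span ⟨s, _, ?_, ?_, rfl⟩
      · intro i j hij
        have h1 : (c i : ℕ) < (c j : ℕ) := hc hij
        exact Fin.mk_lt_mk.mpr (by have := hall i; omega)
      · rintro ⟨hst, hle⟩
        refine hnle ⟨hst, fun i => ?_⟩
        have h1 : ∀ j : Fin (2 * t), (b j : ℕ) ≤ (c i : ℕ) - ((a ⟨0, h2t⟩ : Fin n) : ℕ) → (a j : ℕ) ≤ (c i : ℕ) := by
          intro j hj
          have h2 := hb j
          have h3 := ha0le j
          have h4 := hall i
          omega
        exact h1 _ (hle i)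
    · push_neg at hall
      obtain ⟨i0, hi0⟩ := hall
      rw [key, pfaffian_eq_zero_of_row s _ i0 ?_ ?_]
      · exact Ideal.zero_mem _
      · intro j
        simp only [Matrix.map_apply, Matrix.submatrix_apply, AlgHom.coe_toRingHom]
        exact redHom_genSkew_zero K n ((a ⟨0, h2t⟩ : Fin n) : ℕ) (c i0) (c j) (Or.inl hi0)
      · intro j
        simp only [Matrix.map_apply, Matrix.submatrix_apply, AlgHom.coe_toRingHom]
        exact redHom_genSkew_zero K n ((a ⟨0, h2t⟩ : Fin n) : ℕ) (c j) (c i0) (Or.inr hi0)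
  -- the backward map sends generators into the source ideal
  have hψI : ∀ p ∈ {p | ∃ (s : ℕ) (c : Fin (2 * s) → Fin (n - ((a ⟨0, h2t⟩ : Fin n) : ℕ))), StrictMono c ∧
      ¬ pfLeIdx t s b c ∧ p = pfaffian s ((genSkew K (n - ((a ⟨0, h2t⟩ : Fin n) : ℕ))).submatrix c c)},
      secHom K n ((a ⟨0, h2t⟩ : Fin n) : ℕ) p ∈ cogenIdeal K n t a := by
    rintro p ⟨s, c, hc, hnle, rfl⟩
    have key : secHom K n ((a ⟨0, h2t⟩ : Fin n) : ℕ) (pfaffian s ((genSkew K (n - ((a ⟨0, h2t⟩ : Fin n) : ℕ))).submatrix c c))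
        = pfaffian s (((genSkew K (n - ((a ⟨0, h2t⟩ : Fin n) : ℕ))).submatrix c c).map (secHom K n ((a ⟨0, h2t⟩ : Fin n) : ℕ)).toRingHom) :=
      pfaffian_ringHom_map (secHom K n ((a ⟨0, h2t⟩ : Fin n) : ℕ)).toRingHom s _
    have hbound : ∀ i : Fin (2 * s), (c i : ℕ) + ((a ⟨0, h2t⟩ : Fin n) : ℕ) < n := fun i => by
      have := (c i).2; omega
    have heq : ((genSkew K (n - ((a ⟨0, h2t⟩ : Fin n) : ℕ))).submatrix c c).map (secHom K n ((a ⟨0, h2t⟩ : Fin n) : ℕ)).toRingHom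
        = (genSkew K n).submatrix
            (fun i => ⟨(c i : ℕ) + ((a ⟨0, h2t⟩ : Fin n) : ℕ), hbound i⟩) (fun i => ⟨(c i : ℕ) + ((a ⟨0, h2t⟩ : Fin n) : ℕ), hbound i⟩) := by
      refine Matrix.ext fun i j => ?_
      simp only [Matrix.map_apply, Matrix.submatrix_apply, AlgHom.coe_toRingHom]
      exact secHom_genSkew K n ((a ⟨0, h2t⟩ : Fin n) : ℕ) (c i) (c j) (hbound i) (hbound j)
    rw [key, heq]
    refine Ideal.subset_span ⟨s, _, ?_, ?_, rfl⟩
    · intro i j hij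
      have h1 : (c i : ℕ) < (c j : ℕ) := hc hij
      exact Fin.mk_lt_mk.mpr (by omega)
    · rintro ⟨hst, hle⟩
      refine hnle ⟨hst, fun i => ?_⟩
      have h1 : ∀ j : Fin (2 * t), (a j : ℕ) ≤ (c i : ℕ) + ((a ⟨0, h2t⟩ : Fin n) : ℕ) → (b j : ℕ) ≤ (c i : ℕ) := by
        intro j hj
        have h2 := hb j
        have h3 := ha0le j
        omega
      exact h1 _ (hle i)
  -- build the quotient algebra homomorphisms
  have h1 : ∀ x ∈ cogenIdeal K n t a,
      ((Ideal.Quotient.mkₐ K (cogenIdeal K (n - ((a ⟨0, h2t⟩ : Fin n) : ℕ)) t b)).comp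
        (redHom K n ((a ⟨0, h2t⟩ : Fin n) : ℕ))) x = 0 := by
    have hker : cogenIdeal K n t a ≤ RingHom.ker
        ((Ideal.Quotient.mkₐ K (cogenIdeal K (n - ((a ⟨0, h2t⟩ : Fin n) : ℕ)) t b)).comp
          (redHom K n ((a ⟨0, h2t⟩ : Fin n) : ℕ))) :=
      Ideal.span_le.mpr fun p hp => RingHom.mem_ker.mpr (by
        simp only [AlgHom.coe_comp, Function.comp_apply, Ideal.Quotient.mkₐ_eq_mk]
        exact Ideal.Quotient.eq_zero_iff_mem.mpr (hφI p hp))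
    exact fun x hx => RingHom.mem_ker.mp (hker hx)
  have h2 : ∀ x ∈ cogenIdeal K (n - ((a ⟨0, h2t⟩ : Fin n) : ℕ)) t b,
      ((Ideal.Quotient.mkₐ K (cogenIdeal K n t a)).comp
        (secHom K n ((a ⟨0, h2t⟩ : Fin n) : ℕ))) x = 0 := by
    have hker : cogenIdeal K (n - ((a ⟨0, h2t⟩ : Fin n) : ℕ)) t b ≤ RingHom.ker
        ((Ideal.Quotient.mkₐ K (cogenIdeal K n t a)).comp
          (secHom K n ((a ⟨0, h2t⟩ : Fin n) : ℕ))) :=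
      Ideal.span_le.mpr fun p hp => RingHom.mem_ker.mpr (by
        simp only [AlgHom.coe_comp, Function.comp_apply, Ideal.Quotient.mkₐ_eq_mk]
        exact Ideal.Quotient.eq_zero_iff_mem.mpr (hψI p hp))
    exact fun x hx => RingHom.mem_ker.mp (hker hx)
  refine ⟨AlgEquiv.ofAlgHom
    (Ideal.Quotient.liftₐ (cogenIdeal K n t a)
      ((Ideal.Quotient.mkₐ K (cogenIdeal K (n - ((a ⟨0, h2t⟩ : Fin n) : ℕ)) t b)).comp
        (redHom K n ((a ⟨0, h2t⟩ : Fin n) : ℕ))) h1)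
    (Ideal.Quotient.liftₐ (cogenIdeal K (n - ((a ⟨0, h2t⟩ : Fin n) : ℕ)) t b)
      ((Ideal.Quotient.mkₐ K (cogenIdeal K n t a)).comp
        (secHom K n ((a ⟨0, h2t⟩ : Fin n) : ℕ))) h2) ?_ ?_⟩
  · apply Ideal.Quotient.algHom_ext
    apply MvPolynomial.algHom_ext
    intro v
    simp only [AlgHom.coe_comp, Function.comp_apply, Ideal.Quotient.mkₐ_eq_mk,
      Ideal.Quotient.liftₐ_apply, Ideal.Quotient.lift_mk, AlgHom.coe_toRingHom,
      AlgHom.id_apply]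
    erw [Ideal.Quotient.lift_mk (cogenIdeal K (n - ((a ⟨0, h2t⟩ : Fin n) : ℕ)) t b), Ideal.Quotient.lift_mk (cogenIdeal K n t a)]
    simp only [AlgHom.coe_toRingHom, AlgHom.coe_comp, Function.comp_apply, Ideal.Quotient.mkₐ_eq_mk]
    rw [sec_red_X]
  · apply Ideal.Quotient.algHom_ext
    apply MvPolynomial.algHom_ext
    intro v
    simp only [AlgHom.coe_comp, Function.comp_apply, Ideal.Quotient.mkₐ_eq_mk,
      Ideal.Quotient.liftₐ_apply, Ideal.Quotient.lift_mk, AlgHom.coe_toRingHom,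
      AlgHom.id_apply]
    erw [Ideal.Quotient.lift_mk (cogenIdeal K n t a), Ideal.Quotient.lift_mk (cogenIdeal K (n - ((a ⟨0, h2t⟩ : Fin n) : ℕ)) t b)]
    simp only [AlgHom.coe_toRingHom, AlgHom.coe_comp, Function.comp_apply, Ideal.Quotient.mkₐ_eq_mk]
    by_cases hv : ((a ⟨0, h2t⟩ : Fin n) : ℕ) ≤ (v.1.1 : ℕ)
    · rw [red_sec_X_ge K n _ v hv]
    · rw [red_X_lt K n _ v hv, map_zero, map_zero]
      exact (Ideal.Quotient.eq_zero_iff_mem.mpr (hXmem v (by omega))).symm
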